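/- For every (u,v) ∈ ℝ², let N(u,v) be the 4×4 real matrix with rows (0, 1, 0, 0), (0, u, v, 1), (0, v, −u, 0), (0, 2(u²+v²), 0, 0), let C(u,v) = exp(N(u,v)), and let A = Ω(1,2π/3). Then det C(u,v) = 1, A³ = I, (A·C(u,v))³ = I, and (A²·C(u,v))³ = I; consequently there exists a group homomorphism Ψ_{(u,v)} : Γ → SL(4,ℝ) with Ψ_{(u,v)}(a) = A and Ψ_{(u,v)}(a²b) = C(u,v). -/

import Mathlib

open Matrix Real

/-- The relations of the turnover group `Γ = ⟨a, b ∣ a³ = b³ = (ab)³ = 1⟩`. -/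
def turnoverRels : Set (FreeGroup (Fin 2)) :=
  {FreeGroup.of 0 ^ 3, FreeGroup.of 1 ^ 3, (FreeGroup.of 0 * FreeGroup.of 1) ^ 3}

/-- The orbifold fundamental group of the Euclidean turnover `S²(3,3,3)`. -/
abbrev TurnoverGroup : Type := PresentedGroup turnoverRels

/-- The generator `a` of `Γ`. -/
def ga : TurnoverGroup := PresentedGroup.of 0

/-- The generator `b` of `Γ`. -/
def gb : TurnoverGroup := PresentedGroup.of 1

/-- The similarity `Ω(1, 2π/3) = diag(1, R, 1)` with `R` the rotation of angle `2π/3`. -/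
noncomputable def Omega : Matrix (Fin 4) (Fin 4) ℝ :=
  !![1, 0, 0, 0;
     0, cos (2 * π / 3), -sin (2 * π / 3), 0;
     0, sin (2 * π / 3), cos (2 * π / 3), 0;
     0, 0, 0, 1]

/-- The tangent-direction matrix `N(u,v)` of the slice family. -/
def Nslice (u v : ℝ) : Matrix (Fin 4) (Fin 4) ℝ :=
  !![0, 1, 0, 0;
     0, u, v, 1;
     0, v, -u, 0;
     0, 2 * (u ^ 2 + v ^ 2), 0, 0]

/-- The slice matrices `C(u,v) = exp(N(u,v))`. -/
noncomputable def Cslice (u v : ℝ) : Matrix (Fin 4) (Fin 4) ℝ :=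
  NormedSpace.exp (Nslice u v)

noncomputable def OmE (s : ℝ) : Matrix (Fin 4) (Fin 4) ℝ :=
  !![1, 0, 0, 0;
     0, -(1/2), -((1/2)*s), 0;
     0, (1/2)*s, -(1/2), 0;
     0, 0, 0, 1]

noncomputable def OmE2 (s : ℝ) : Matrix (Fin 4) (Fin 4) ℝ :=
  !![1, 0, 0, 0;
     0, -(1/2), (1/2)*s, 0;
     0, -((1/2)*s), -(1/2), 0;
     0, 0, 0, 1]

noncomputable def Pm (u v s : ℝ) : Matrix (Fin 4) (Fin 4) ℝ :=
  !![0, (-1/2:ℝ), (1/6:ℝ)*s, 0;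
     0, (1/6:ℝ)*v*s + (-1/2:ℝ)*u, (-1/2:ℝ)*v + (-1/6:ℝ)*u*s, (-1/2:ℝ);
     0, (-1/2:ℝ)*v + (-1/6:ℝ)*u*s, (-1/6:ℝ)*v*s + (1/2:ℝ)*u, (1/6:ℝ)*s;
     0, (-1:ℝ)*v^2 + (-1:ℝ)*u^2, (1/3:ℝ)*v^2*s + (1/3:ℝ)*u^2*s, 0]

noncomputable def Qm (u v s : ℝ) : Matrix (Fin 4) (Fin 4) ℝ :=
  !![0, (1/2:ℝ), (1/6:ℝ)*s, 0;
     0, (1/6:ℝ)*v*s + (1/2:ℝ)*u, (1/2:ℝ)*v + (-1/6:ℝ)*u*s, (1/2:ℝ);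
     0, (1/2:ℝ)*v + (-1/6:ℝ)*u*s, (-1/6:ℝ)*v*s + (-1/2:ℝ)*u, (1/6:ℝ)*s;
     0, (1:ℝ)*v^2 + (1:ℝ)*u^2, (1/3:ℝ)*v^2*s + (1/3:ℝ)*u^2*s, 0]

noncomputable def P2m (u v s : ℝ) : Matrix (Fin 4) (Fin 4) ℝ :=
  !![0, (-1/2:ℝ), (-1/6:ℝ)*s, 0;
     0, (-1/6:ℝ)*v*s + (-1/2:ℝ)*u, (-1/2:ℝ)*v + (1/6:ℝ)*u*s, (-1/2:ℝ);
     0, (-1/2:ℝ)*v + (1/6:ℝ)*u*s, (1/6:ℝ)*v*s + (1/2:ℝ)*u, (-1/6:ℝ)*s;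
     0, (-1:ℝ)*v^2 + (-1:ℝ)*u^2, (-1/3:ℝ)*v^2*s + (-1/3:ℝ)*u^2*s, 0]

noncomputable def Q2m (u v s : ℝ) : Matrix (Fin 4) (Fin 4) ℝ :=
  !![0, (1/2:ℝ), (-1/6:ℝ)*s, 0;
     0, (-1/6:ℝ)*v*s + (1/2:ℝ)*u, (1/2:ℝ)*v + (1/6:ℝ)*u*s, (1/2:ℝ);
     0, (1/2:ℝ)*v + (1/6:ℝ)*u*s, (1/6:ℝ)*v*s + (-1/2:ℝ)*u, (-1/6:ℝ)*s;
     0, (1:ℝ)*v^2 + (1:ℝ)*u^2, (-1/3:ℝ)*v^2*s + (-1/3:ℝ)*u^2*s, 0]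

def Nslice0 (u v : ℝ) : Matrix (Fin 4) (Fin 4) ℝ :=
  !![0, 1, 0, 0;
     0, u, v, 1;
     0, v, -u, 0;
     0, 2 * (u ^ 2 + v ^ 2), 0, 0]

set_option maxHeartbeats 1000000 in
lemma mOmSq (s : ℝ) (hs : s ^ 2 = 3) : OmE s * OmE s = OmE2 s := by
  ext i j
  fin_cases i <;> fin_cases j <;>
    simp [OmE, OmE2, Matrix.mul_apply, Fin.sum_univ_four, Matrix.vecHead, Matrix.vecTail] <;>
    first
      | ring1
      | linear_combination ((-1/4:ℝ)) * hs

set_option maxHeartbeats 1000000 in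
lemma mOm3 (s : ℝ) (hs : s ^ 2 = 3) : OmE2 s * OmE s = 1 := by
  ext i j
  fin_cases i <;> fin_cases j <;>
    simp [OmE, OmE2, Matrix.mul_apply, Fin.sum_univ_four, Matrix.vecHead, Matrix.vecTail,
      Matrix.one_apply] <;>
    first
      | ring1
      | linear_combination ((1/4:ℝ)) * hs

set_option maxHeartbeats 1600000 in
lemma mQ (u v s : ℝ) (hs : s ^ 2 = 3) :
    OmE2 s * Pm u v s * OmE s = Qm u v s := by
  ext i j
  fin_cases i <;> fin_cases j <;>
    simp [OmE, OmE2, Pm, Qm, Matrix.mul_apply, Fin.sum_univ_four, Matrix.vecHead,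
      Matrix.vecTail] <;>
    first
      | ring1
      | linear_combination ((-1/24:ℝ)*v*s + (5/24:ℝ)*u) * hs
      | linear_combination ((1/12:ℝ)) * hs
      | linear_combination ((1/24:ℝ)*v*s + (-5/24:ℝ)*u) * hs
      | linear_combination ((1/6:ℝ)*v^2 + (1/6:ℝ)*u^2) * hs
      | linear_combination ((5/24:ℝ)*v + (1/24:ℝ)*u*s) * hs

set_option maxHeartbeats 1600000 in
lemma mcomm (u v s : ℝ) : Qm u v s * Pm u v s = Pm u v s * Qm u v s := by
  ext i j
  fin_cases i <;> fin_cases j <;>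
    simp [Pm, Qm, Matrix.mul_apply, Fin.sum_univ_four, Matrix.vecHead, Matrix.vecTail] <;>
    ring1

set_option maxHeartbeats 1000000 in
lemma mN (u v s : ℝ) : Qm u v s - Pm u v s = Nslice0 u v := by
  ext i j
  fin_cases i <;> fin_cases j <;>
    simp [Pm, Qm, Nslice0, Matrix.sub_apply, Matrix.vecHead, Matrix.vecTail] <;>
    ring1

set_option maxHeartbeats 1600000 in
lemma mQ2 (u v s : ℝ) (hs : s ^ 2 = 3) :
    OmE s * P2m u v s * OmE2 s = Q2m u v s := by
  ext i j
  fin_cases i <;> fin_cases j <;>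
    simp [OmE, OmE2, P2m, Q2m, Matrix.mul_apply, Fin.sum_univ_four, Matrix.vecHead,
      Matrix.vecTail] <;>
    first
      | ring1
      | linear_combination ((-1/24:ℝ)*v*s + (-5/24:ℝ)*u) * hs
      | linear_combination ((1/12:ℝ)) * hs
      | linear_combination ((1/24:ℝ)*v*s + (5/24:ℝ)*u) * hs
      | linear_combination ((1/6:ℝ)*v^2 + (1/6:ℝ)*u^2) * hs
      | linear_combination ((5/24:ℝ)*v + (-1/24:ℝ)*u*s) * hs

set_option maxHeartbeats 1600000 in
lemma mcomm2 (u v s : ℝ) : Q2m u v s * P2m u v s = P2m u v s * Q2m u v s := by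
  ext i j
  fin_cases i <;> fin_cases j <;>
    simp [P2m, Q2m, Matrix.mul_apply, Fin.sum_univ_four, Matrix.vecHead, Matrix.vecTail] <;>
    ring1

set_option maxHeartbeats 1000000 in
lemma mN2 (u v s : ℝ) : Q2m u v s - P2m u v s = Nslice0 u v := by
  ext i j
  fin_cases i <;> fin_cases j <;>
    simp [P2m, Q2m, Nslice0, Matrix.sub_apply, Matrix.vecHead, Matrix.vecTail] <;>
    ring1

set_option maxHeartbeats 1000000 in
lemma mdet (s : ℝ) (hs : s ^ 2 = 3) : (OmE s).det = 1 := by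
  simp [OmE, Matrix.det_succ_row_zero, Fin.sum_univ_succ]
  linear_combination ((1/4:ℝ)) * hs


lemma cube_one (A P Q Nm : Matrix (Fin 4) (Fin 4) ℝ)
    (hA3 : A ^ 3 = 1) (hQ : A ^ 2 * P * A = Q) (hcomm : Q * P = P * Q)
    (hN : Q - P = Nm) :
    (A * NormedSpace.exp Nm) ^ 3 = 1 := by
  have hAA : A * A ^ 2 = 1 := by rw [← pow_succ']; exact hA3
  have hA2A : A ^ 2 * A = 1 := by rw [← pow_succ]; exact hA3
  let U : (Matrix (Fin 4) (Fin 4) ℝ)ˣ := ⟨A, A ^ 2, hAA, hA2A⟩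
  have hexpQ : NormedSpace.exp (A ^ 2 * P * A) = A ^ 2 * NormedSpace.exp P * A :=
    Matrix.exp_units_conj' U P
  have hPP : NormedSpace.exp P * NormedSpace.exp (-P) = 1 := by
    rw [← Matrix.exp_add_of_commute P (-P) ((Commute.refl P).neg_right),
      add_neg_cancel, NormedSpace.exp_zero]
  have hPP' : NormedSpace.exp (-P) * NormedSpace.exp P = 1 := by
    rw [← Matrix.exp_add_of_commute (-P) P ((Commute.refl P).neg_left),
      neg_add_cancel, NormedSpace.exp_zero]
  have key : A * NormedSpace.exp Nm
      = NormedSpace.exp P * A * NormedSpace.exp (-P) := by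
    rw [← hN, sub_eq_add_neg,
      Matrix.exp_add_of_commute Q (-P) (Commute.neg_right (show Commute Q P from hcomm)), ← hQ, hexpQ]
    simp only [← mul_assoc]
    rw [hAA, one_mul]
  rw [key, pow_succ, pow_succ, pow_one]
  simp only [mul_assoc]
  simp only [show ∀ Z, NormedSpace.exp (-P) * (NormedSpace.exp P * Z) = Z from
    fun Z => by rw [← mul_assoc, hPP', one_mul]]
  rw [show A * (A * (A * NormedSpace.exp (-P))) = A ^ 3 * NormedSpace.exp (-P) from by
    rw [pow_succ', pow_succ', pow_one, mul_assoc, mul_assoc], hA3, one_mul, hPP]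

/-- For every `(u,v) ∈ ℝ²`, with `A = Ω(1, 2π/3)` and `C(u,v) = exp(N(u,v))`, one has
`det C(u,v) = 1`, `A³ = I`, `(A C(u,v))³ = I` and `(A² C(u,v))³ = I`; consequently there
is a group homomorphism `Ψ₍u,v₎ : Γ → SL(4,ℝ)` with `Ψ₍u,v₎(a) = A` and
`Ψ₍u,v₎(a²b) = C(u,v)`. -/
theorem slice_representations (u v : ℝ) :
    (Cslice u v).det = 1 ∧
      Omega ^ 3 = 1 ∧
      (Omega * Cslice u v) ^ 3 = 1 ∧
      (Omega ^ 2 * Cslice u v) ^ 3 = 1 ∧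
      ∃ Ψ : TurnoverGroup →* Matrix.SpecialLinearGroup (Fin 4) ℝ,
        (Ψ ga : Matrix (Fin 4) (Fin 4) ℝ) = Omega ∧
        (Ψ (ga ^ 2 * gb) : Matrix (Fin 4) (Fin 4) ℝ) = Cslice u v := by
  have hs : Real.sqrt 3 ^ 2 = 3 := Real.sq_sqrt (by norm_num)
  have h23 : (2:ℝ) * π / 3 = π - π / 3 := by ring
  have h1 : Real.cos (2 * π / 3) = -(1/2) := by
    rw [h23, Real.cos_pi_sub, Real.cos_pi_div_three]
  have h2 : Real.sin (2 * π / 3) = (1/2) * Real.sqrt 3 := by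
    rw [h23, Real.sin_pi_sub, Real.sin_pi_div_three]; ring
  have hOm : Omega = OmE (Real.sqrt 3) := by
    rw [Omega, OmE, h1, h2]
  have hNs : Nslice u v = Nslice0 u v := rfl
  have hOm3E : OmE (Real.sqrt 3) ^ 3 = 1 := by
    rw [pow_succ, pow_two, mOmSq _ hs, mOm3 _ hs]
  have hOm3 : Omega ^ 3 = 1 := by rw [hOm]; exact hOm3E
  have hE2 : OmE2 (Real.sqrt 3) = OmE (Real.sqrt 3) ^ 2 := by
    rw [pow_two, mOmSq _ hs]
  have hE2sq : OmE2 (Real.sqrt 3) ^ 2 = OmE (Real.sqrt 3) := by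
    have h4 : OmE (Real.sqrt 3) ^ (4:ℕ) = OmE (Real.sqrt 3) ^ 3 * OmE (Real.sqrt 3) :=
      pow_succ _ 3
    rw [hOm3E, one_mul] at h4
    rw [hE2, ← pow_mul]
    exact h4
  have hE23 : OmE2 (Real.sqrt 3) ^ 3 = 1 := by
    rw [hE2, ← pow_mul, show (2 * 3 : ℕ) = 3 * 2 from rfl, pow_mul, hOm3E, one_pow]
  have hACl : (Omega * Cslice u v) ^ 3 = 1 := by
    rw [hOm]
    refine cube_one (OmE (Real.sqrt 3)) (Pm u v (Real.sqrt 3)) (Qm u v (Real.sqrt 3))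
      (Nslice u v) hOm3E ?_ (mcomm u v (Real.sqrt 3)) ?_
    · rw [← hE2]; exact mQ u v (Real.sqrt 3) hs
    · rw [hNs]; exact mN u v (Real.sqrt 3)
  have hA2Cl : (Omega ^ 2 * Cslice u v) ^ 3 = 1 := by
    rw [hOm, ← hE2]
    refine cube_one (OmE2 (Real.sqrt 3)) (P2m u v (Real.sqrt 3)) (Q2m u v (Real.sqrt 3))
      (Nslice u v) hE23 ?_ (mcomm2 u v (Real.sqrt 3)) ?_
    · rw [hE2sq]; exact mQ2 u v (Real.sqrt 3) hs
    · rw [hNs]; exact mN2 u v (Real.sqrt 3)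
  have hdetOm : Omega.det = 1 := by rw [hOm]; exact mdet _ hs
  have hdetC : (Cslice u v).det = 1 := by
    have h3 : (Cslice u v).det ^ 3 = 1 := by
      have h4 := congrArg Matrix.det hACl
      rw [Matrix.det_pow, Matrix.det_mul, hdetOm, one_mul, Matrix.det_one] at h4
      exact h4
    have hfac : ((Cslice u v).det - 1) *
        ((Cslice u v).det ^ 2 + (Cslice u v).det + 1) = 0 := by
      linear_combination h3
    rcases mul_eq_zero.mp hfac with h | h
    · linarith
    · exfalso; nlinarith [sq_nonneg (2 * (Cslice u v).det + 1)]
  let AS : Matrix.SpecialLinearGroup (Fin 4) ℝ := ⟨Omega, hdetOm⟩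
  let BS : Matrix.SpecialLinearGroup (Fin 4) ℝ :=
    ⟨Omega * Cslice u v, by rw [Matrix.det_mul, hdetOm, hdetC, one_mul]⟩
  have hAS3 : AS ^ 3 = 1 := Subtype.coe_injective hOm3
  have hBS3 : BS ^ 3 = 1 := Subtype.coe_injective hACl
  have hABmat : (Omega * (Omega * Cslice u v)) ^ 3 = 1 := by
    rw [← mul_assoc, ← pow_two]
    exact hA2Cl
  have hABS3 : (AS * BS) ^ 3 = 1 := Subtype.coe_injective hABmat
  let f : Fin 2 → Matrix.SpecialLinearGroup (Fin 4) ℝ := ![AS, BS]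
  have hrels : ∀ r ∈ turnoverRels, FreeGroup.lift f r = 1 := by
    intro r hr
    simp only [turnoverRels, Set.mem_insert_iff, Set.mem_singleton_iff] at hr
    rcases hr with h | h | h
    · rw [h, map_pow, FreeGroup.lift_apply_of]
      exact hAS3
    · rw [h, map_pow, FreeGroup.lift_apply_of]
      exact hBS3
    · rw [h, map_pow, _root_.map_mul, FreeGroup.lift_apply_of, FreeGroup.lift_apply_of]
      exact hABS3
  have h0 : PresentedGroup.toGroup hrels ga = AS := PresentedGroup.toGroup.of hrels
  have h1g : PresentedGroup.toGroup hrels gb = BS := PresentedGroup.toGroup.of hrels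
  refine ⟨hdetC, hOm3, hACl, hA2Cl, PresentedGroup.toGroup hrels, ?_, ?_⟩
  · rw [h0]
  · rw [_root_.map_mul, map_pow, h0, h1g]
    show Omega ^ 2 * (Omega * Cslice u v) = Cslice u v
    rw [← mul_assoc, ← pow_succ, hOm3, one_mul]
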